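/- Property [A] holds for the Invincible Fighter: for u = 1 and every fixed n ≥ 1, the function t ↦ K(n,t) is non-increasing on [0,∞). -/

import Mathlib

open Real MeasureTheory Filter Topology

/-- Auxiliary history-based recursion: `Nhist a u n m t` equals `N(m,t)` when `m ≤ n`. -/
noncomputable def Nhist (a : ℕ → ℝ) (u : ℝ) : ℕ → ℕ → ℝ → ℝ
  | 0, _, _ => 0
  | n + 1, m, t =>
      if m ≤ n then Nhist a u n m t
      else (Finset.Icc 1 (n + 1)).sup'
          (Finset.nonempty_Icc.mpr (Nat.succ_le_succ (Nat.zero_le n)))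
          (fun j => a j + (a j * (1 - u) + u) *
            (Real.exp (-t) * ∫ x in (0:ℝ)..t, Nhist a u n (n + 1 - j) x * Real.exp x))

/-- `Nval a u n t` is `N(n,t)`, the optimal expected number of enemy planes shot down,
with `N(0,t) = 0` and `N(n,t) = max_{1 ≤ j ≤ n} N_n(j,t)`. -/
noncomputable def Nval (a : ℕ → ℝ) (u : ℝ) (n : ℕ) (t : ℝ) : ℝ :=
  Nhist a u n n t

/-- `Nstar a u r t` is `N*(r,t) = e^{-t} ∫_0^t N(r,x) e^x dx` (so `N*(0,t) = 0`). -/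
noncomputable def Nstar (a : ℕ → ℝ) (u : ℝ) (r : ℕ) (t : ℝ) : ℝ :=
  Real.exp (-t) * ∫ x in (0:ℝ)..t, Nval a u r x * Real.exp x

/-- `Nalloc a u n j t` is `N_n(j,t) = a(j) + c(j)·N*(n-j,t)` where `c(j) = a(j)(1-u)+u`. -/
noncomputable def Nalloc (a : ℕ → ℝ) (u : ℝ) (n j : ℕ) (t : ℝ) : ℝ :=
  a j + (a j * (1 - u) + u) * Nstar a u (n - j) t

/-- `Kopt a u n t = min { j ∈ {1,…,n} : N_n(j,t) = N(n,t) }`. -/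
noncomputable def Kopt (a : ℕ → ℝ) (u : ℝ) (n : ℕ) (t : ℝ) : ℕ :=
  sInf {j : ℕ | 1 ≤ j ∧ j ≤ n ∧ Nalloc a u n j t = Nval a u n t}

section helpers
variable {a : ℕ → ℝ}

lemma nhist_eq (u : ℝ) : ∀ n m, m ≤ n → Nhist a u n m = Nhist a u m m := by
  intro n
  induction n with
  | zero => intro m hm; interval_cases m; rfl
  | succ n ih =>
      intro m hm
      rcases Nat.lt_or_ge m (n+1) with h | h
      · funext t
        rw [Nhist, if_pos (by omega)]
        exact congrFun (ih m (by omega)) t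
      · have : m = n + 1 := by omega
        subst this; rfl

lemma nhist_zero_eq (u : ℝ) (m : ℕ) : Nhist a u 0 m = fun _ => 0 := rfl

lemma nval_zero (u : ℝ) (t : ℝ) : Nval a u 0 t = 0 := rfl

lemma nstar_zero (u : ℝ) (t : ℝ) : Nstar a u 0 t = 0 := by
  have : (fun x : ℝ => Nval a u 0 x * Real.exp x) = fun _ => 0 := by
    funext x; rw [nval_zero]; ring
  simp [Nstar, this]

lemma icc_ne (n : ℕ) : (Finset.Icc 1 (n+1)).Nonempty :=
  Finset.nonempty_Icc.mpr (Nat.succ_le_succ (Nat.zero_le n))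

lemma nval_succ (n : ℕ) (t : ℝ) :
    Nval a 1 (n+1) t
      = (Finset.Icc 1 (n+1)).sup' (icc_ne n) (fun j => a j + Nstar a 1 (n+1-j) t) := by
  show Nhist a 1 (n+1) (n+1) t = _
  rw [Nhist, if_neg (by omega)]
  apply Finset.sup'_congr _ rfl
  intro j hj
  rw [Finset.mem_Icc] at hj
  have h1 : Nhist a 1 n (n + 1 - j) = Nhist a 1 (n+1-j) (n+1-j) :=
    nhist_eq 1 n (n+1-j) (by omega)
  have h2 : (fun x : ℝ => Nhist a 1 n (n + 1 - j) x * Real.exp x)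
      = fun x => Nval a 1 (n+1-j) x * Real.exp x := by
    funext x; rw [h1]; rfl
  rw [h2]
  show a j + (a j * (1-1) + 1) * _ = a j + Nstar a 1 (n+1-j) t
  rw [show (a j * (1-1) + 1) = 1 by ring, one_mul]
  rfl

end helpers

section cont
variable {a : ℕ → ℝ}

lemma cont_sup' {s : Finset ℕ} (hs : s.Nonempty) {f : ℕ → ℝ → ℝ}
    (hf : ∀ j ∈ s, Continuous (f j)) :
    Continuous (fun t => s.sup' hs (fun j => f j t)) := by
  induction hs using Finset.Nonempty.cons_induction with
  | singleton j =>
      simp only [Finset.sup'_singleton]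
      exact hf j (by simp)
  | cons j s hj hs ih =>
      simp only [Finset.sup'_cons hs]
      exact (hf j (by simp)).sup (ih (fun i hi => hf i (by simp [hi])))

lemma nstar_continuous_of {r : ℕ} (h : Continuous (Nval a 1 r)) :
    Continuous (Nstar a 1 r) := by
  have hint : Continuous fun x => Nval a 1 r x * Real.exp x := h.mul Real.continuous_exp
  exact (Real.continuous_exp.comp continuous_neg).mul
    (intervalIntegral.continuous_primitive (fun c d => hint.intervalIntegrable c d) 0)

lemma nval_continuous : ∀ n : ℕ, Continuous (Nval a 1 n) := by
  intro n
  induction n using Nat.strong_induction_on with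
  | _ n ih =>
    match n with
    | 0 => exact continuous_const.congr (fun t => (nval_zero 1 t).symm)
    | n + 1 =>
        have : Continuous fun t =>
            (Finset.Icc 1 (n+1)).sup' (icc_ne n) (fun j => a j + Nstar a 1 (n+1-j) t) := by
          apply cont_sup'
          intro j hj
          rw [Finset.mem_Icc] at hj
          exact continuous_const.add (nstar_continuous_of (ih (n+1-j) (by omega)))
        exact this.congr (fun t => (nval_succ n t).symm)

lemma nstar_continuous (r : ℕ) : Continuous (Nstar a 1 r) :=
  nstar_continuous_of (nval_continuous r)

lemma nstar_hasDerivAt (r : ℕ) (t : ℝ) :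
    HasDerivAt (Nstar a 1 r) (Nval a 1 r t - Nstar a 1 r t) t := by
  have hint : Continuous fun x => Nval a 1 r x * Real.exp x :=
    (nval_continuous r).mul Real.continuous_exp
  have hF : HasDerivAt (fun u => ∫ x in (0:ℝ)..u, Nval a 1 r x * Real.exp x)
      (Nval a 1 r t * Real.exp t) t :=
    intervalIntegral.integral_hasDerivAt_right (hint.intervalIntegrable 0 t)
      (hint.stronglyMeasurableAtFilter _ _) hint.continuousAt
  have he : HasDerivAt (fun u : ℝ => Real.exp (-u)) (-Real.exp (-t)) t := by
    simpa [Function.comp_def] using (Real.hasDerivAt_exp (-t)).comp t (hasDerivAt_neg t)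
  have := he.mul hF
  have heq : -Real.exp (-t) * (∫ x in (0:ℝ)..t, Nval a 1 r x * Real.exp x)
      + Real.exp (-t) * (Nval a 1 r t * Real.exp t)
      = Nval a 1 r t - Nstar a 1 r t := by
    rw [Nstar, Real.exp_neg]
    have h := Real.exp_pos t
    field_simp
    ring
  rw [heq] at this
  exact this

lemma nval_one (t : ℝ) : Nval a 1 1 t = a 1 := by
  rw [show (1:ℕ) = 0 + 1 from rfl, nval_succ]
  simp [nstar_zero]

lemma nval_ge {n j : ℕ} (hj1 : 1 ≤ j) (hjn : j ≤ n) (t : ℝ) :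
    a j + Nstar a 1 (n - j) t ≤ Nval a 1 n t := by
  obtain ⟨m, rfl⟩ : ∃ m, n = m + 1 := ⟨n - 1, by omega⟩
  rw [nval_succ]
  exact Finset.le_sup' (fun j => a j + Nstar a 1 (m+1-j) t) (Finset.mem_Icc.mpr ⟨hj1, hjn⟩)

lemma nval_exists {n : ℕ} (hn : 1 ≤ n) (t : ℝ) :
    ∃ j, 1 ≤ j ∧ j ≤ n ∧ Nval a 1 n t = a j + Nstar a 1 (n - j) t := by
  obtain ⟨m, rfl⟩ : ∃ m, n = m + 1 := ⟨n - 1, by omega⟩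
  obtain ⟨j, hj, hje⟩ := Finset.exists_mem_eq_sup' (icc_ne m)
    (fun j => a j + Nstar a 1 (m+1-j) t)
  rw [Finset.mem_Icc] at hj
  exact ⟨j, hj.1, hj.2, by rw [nval_succ]; exact hje⟩

end cont

section mainind
variable {a : ℕ → ℝ}

lemma star_mono {p q : ℕ} {t : ℝ} (ht : 0 ≤ t)
    (h : ∀ x, 0 ≤ x → Nval a 1 p x ≤ Nval a 1 q x) :
    Nstar a 1 p t ≤ Nstar a 1 q t := by
  unfold Nstar
  apply mul_le_mul_of_nonneg_left _ (Real.exp_pos _).le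
  apply intervalIntegral.integral_mono_on ht
    (((nval_continuous p).mul Real.continuous_exp).intervalIntegrable 0 t)
    (((nval_continuous q).mul Real.continuous_exp).intervalIntegrable 0 t)
  intro x hx
  exact mul_le_mul_of_nonneg_right (h x hx.1) (Real.exp_pos x).le

lemma star_concave {k l m : ℕ} {t : ℝ} (ht : 0 ≤ t)
    (h : ∀ x, 0 ≤ x → Nval a 1 k x + Nval a 1 l x ≤ 2 * Nval a 1 m x) :
    Nstar a 1 k t + Nstar a 1 l t ≤ 2 * Nstar a 1 m t := by
  have ik : IntervalIntegrable (fun x => Nval a 1 k x * Real.exp x) MeasureTheory.volume 0 t :=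
    ((nval_continuous k).mul Real.continuous_exp).intervalIntegrable 0 t
  have il : IntervalIntegrable (fun x => Nval a 1 l x * Real.exp x) MeasureTheory.volume 0 t :=
    ((nval_continuous l).mul Real.continuous_exp).intervalIntegrable 0 t
  have im : IntervalIntegrable (fun x => Nval a 1 m x * Real.exp x) MeasureTheory.volume 0 t :=
    ((nval_continuous m).mul Real.continuous_exp).intervalIntegrable 0 t
  have e1 : Nstar a 1 k t + Nstar a 1 l t
      = Real.exp (-t) * ∫ x in (0:ℝ)..t,
          (Nval a 1 k x * Real.exp x + Nval a 1 l x * Real.exp x) := by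
    rw [intervalIntegral.integral_add ik il, Nstar, Nstar]; ring
  have e2 : 2 * Nstar a 1 m t
      = Real.exp (-t) * ∫ x in (0:ℝ)..t,
          (Nval a 1 m x * Real.exp x + Nval a 1 m x * Real.exp x) := by
    rw [intervalIntegral.integral_add im im, Nstar]; ring
  rw [e1, e2]
  apply mul_le_mul_of_nonneg_left _ (Real.exp_pos _).le
  apply intervalIntegral.integral_mono_on ht (ik.add il) (im.add im)
  intro x hx
  have hh := h x hx.1
  nlinarith [Real.exp_pos x]

lemma a_delta_antitone (hconc : ∀ j : ℕ, a (j + 2) - a (j + 1) < a (j + 1) - a j) :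
    ∀ p q, p ≤ q → a (q+1) - a q ≤ a (p+1) - a p := by
  intro p q hpq
  induction q, hpq using Nat.le_induction with
  | base => exact le_refl _
  | succ q hq ih => exact le_trans (le_of_lt (by simpa using hconc q)) ih

lemma nstar_one_le (ha1 : 0 ≤ a 1) {t : ℝ} (ht : 0 ≤ t) : Nstar a 1 1 t ≤ a 1 := by
  have e : (fun x : ℝ => Nval a 1 1 x * Real.exp x) = fun x => a 1 * Real.exp x := by
    funext x; rw [nval_one]
  rw [Nstar, e, intervalIntegral.integral_const_mul, integral_exp, Real.exp_neg,
    inv_mul_le_iff₀ (Real.exp_pos t), Real.exp_zero]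
  nlinarith [Real.one_le_exp ht]

lemma main_ind (ha1 : 0 ≤ a 1) (ha0 : a 0 = 0)
    (hconc : ∀ j : ℕ, a (j + 2) - a (j + 1) < a (j + 1) - a j) :
    ∀ n : ℕ,
      (∀ k t, k + 2 ≤ n → 0 ≤ t →
        Nval a 1 (k+2) t + Nval a 1 k t ≤ 2 * Nval a 1 (k+1) t)
      ∧ (∀ k t, k + 1 ≤ n → 0 ≤ t → Nval a 1 k t ≤ Nval a 1 (k+1) t) := by
  intro n
  induction n with
  | zero => exact ⟨fun k t hk => by omega, fun k t hk => by omega⟩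
  | succ n ih =>
    obtain ⟨ihc, ihm⟩ := ih
    have Mmono : ∀ k t, k + 1 ≤ n → 0 ≤ t → Nstar a 1 k t ≤ Nstar a 1 (k+1) t :=
      fun k t hk ht => star_mono ht (fun x hx => ihm k x hk hx)
    have Mco : ∀ k t, k + 2 ≤ n → 0 ≤ t →
        Nstar a 1 (k+2) t + Nstar a 1 k t ≤ 2 * Nstar a 1 (k+1) t :=
      fun k t hk ht => star_concave ht (fun x hx => ihc k x hk hx)
    have DM : ∀ p q t, p ≤ q → q + 1 ≤ n → 0 ≤ t →
        Nstar a 1 (q+1) t - Nstar a 1 q t ≤ Nstar a 1 (p+1) t - Nstar a 1 p t := by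
      intro p q t hpq hqn ht
      induction q, hpq using Nat.le_induction with
      | base => exact le_refl _
      | succ q hq ih2 =>
        have step := Mco q t (by omega) ht
        have h2 := ih2 (by omega)
        linarith
    constructor
    · intro k t hk ht
      rcases Nat.lt_or_ge (k+2) (n+1) with h | h
      · exact ihc k t (by omega) ht
      · have hkn : k + 1 = n := by omega
        rcases Nat.eq_zero_or_pos k with rfl | hk1
        · -- N 2 + N 0 ≤ 2 N 1
          rw [nval_zero, nval_one]
          obtain ⟨j, hj1, hj2, hje⟩ := nval_exists (a := a) (n := 2) (by norm_num) t
          interval_cases j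
          · rw [hje]
            have := nstar_one_le (a := a) ha1 ht
            norm_num
            linarith
          · rw [hje]
            have h2 := hconc 0
            rw [nstar_zero]
            rw [ha0] at h2
            norm_num at h2 ⊢
            linarith
        · obtain ⟨j, hj1, hjn, hje⟩ := nval_exists (a := a) (n := k+2) (by omega) t
          obtain ⟨j', hj'1, hj'n, hj'e⟩ := nval_exists (a := a) (n := k) (by omega) t
          by_cases hcase : j' < j
          · have hj2 : 2 ≤ j := by omega
            have h1 := nval_ge (a := a) (n := k+1) (j := j-1) (by omega) (by omega) t
            have h2 := nval_ge (a := a) (n := k+1) (j := j'+1) (by omega) (by omega) t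
            have ia0 := a_delta_antitone hconc j' (j-1) (by omega)
            rw [show j - 1 + 1 = j by omega] at ia0
            rw [show (k+1) - (j-1) = (k+2) - j by omega] at h1
            rw [show (k+1) - (j'+1) = k - j' by omega] at h2
            linarith [hje, hj'e]
          · push_neg at hcase
            have h1 := nval_ge (a := a) (n := k+1) (j := j) hj1 (by omega) t
            have h2 := nval_ge (a := a) (n := k+1) (j := j') hj'1 (by omega) t
            have im := DM (k - j') (k + 1 - j) t (by omega) (by omega) ht
            rw [show (k+1-j)+1 = (k+2) - j by omega,
              show (k-j')+1 = (k+1) - j' by omega] at im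
            linarith [hje, hj'e]
    · intro k t hk ht
      rcases Nat.lt_or_ge (k+1) (n+1) with h | h
      · exact ihm k t (by omega) ht
      · have hkn : k = n := by omega
        rcases Nat.eq_zero_or_pos k with rfl | hk1
        · rw [nval_zero, nval_one]; exact ha1
        · obtain ⟨j, hj1, hjn, hje⟩ := nval_exists (a := a) (n := k) hk1 t
          have hm := Mmono (k - j) t (by omega) ht
          rw [show (k-j)+1 = (k+1) - j by omega] at hm
          have h2 := nval_ge (a := a) (n := k+1) (j := j) hj1 (by omega) t
          rw [hje]
          linarith

end mainind

section final
variable {a : ℕ → ℝ}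

lemma nco_global (ha1 : 0 ≤ a 1) (ha0 : a 0 = 0)
    (hconc : ∀ j : ℕ, a (j + 2) - a (j + 1) < a (j + 1) - a j) :
    ∀ k (t : ℝ), 0 ≤ t → Nval a 1 (k+2) t + Nval a 1 k t ≤ 2 * Nval a 1 (k+1) t :=
  fun k t ht => (main_ind ha1 ha0 hconc (k+2)).1 k t le_rfl ht

lemma nmono_global (ha1 : 0 ≤ a 1) (ha0 : a 0 = 0)
    (hconc : ∀ j : ℕ, a (j + 2) - a (j + 1) < a (j + 1) - a j) :
    ∀ k (t : ℝ), 0 ≤ t → Nval a 1 k t ≤ Nval a 1 (k+1) t :=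
  fun k t ht => (main_ind ha1 ha0 hconc (k+1)).2 k t le_rfl ht

lemma dm_global (ha1 : 0 ≤ a 1) (ha0 : a 0 = 0)
    (hconc : ∀ j : ℕ, a (j + 2) - a (j + 1) < a (j + 1) - a j) :
    ∀ p q (t : ℝ), p ≤ q → 0 ≤ t →
      Nstar a 1 (q+1) t - Nstar a 1 q t ≤ Nstar a 1 (p+1) t - Nstar a 1 p t := by
  intro p q t hpq ht
  induction q, hpq using Nat.le_induction with
  | base => exact le_refl _
  | succ q hq ih2 =>
    have step := star_concave (a := a) (k := q+2) (l := q) (m := q+1) ht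
      (fun x hx => nco_global ha1 ha0 hconc q x hx)
    linarith

lemma hD (ha1 : 0 ≤ a 1) (ha0 : a 0 = 0)
    (hconc : ∀ j : ℕ, a (j + 2) - a (j + 1) < a (j + 1) - a j)
    (m : ℕ) {t : ℝ} (ht : 0 ≤ t) :
    Nstar a 1 (m+1) t - Nstar a 1 m t ≤ Nval a 1 (m+1) t - Nval a 1 m t := by
  rcases Nat.eq_zero_or_pos m with rfl | hm
  · rw [nstar_zero, nval_zero, nval_one]
    have := nstar_one_le ha1 ht
    linarith
  · obtain ⟨j, hj1, hjm, hje⟩ := nval_exists (a := a) hm t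
    have h2 := nval_ge (a := a) (n := m+1) (j := j) hj1 (by omega) t
    have hdm := dm_global ha1 ha0 hconc (m - j) m t (by omega) ht
    rw [show (m-j)+1 = (m+1) - j by omega] at hdm
    linarith [hje]

lemma d_mono (ha1 : 0 ≤ a 1) (ha0 : a 0 = 0)
    (hconc : ∀ j : ℕ, a (j + 2) - a (j + 1) < a (j + 1) - a j) (m : ℕ) :
    MonotoneOn (fun t => Nstar a 1 (m+1) t - Nstar a 1 m t) (Set.Ici (0:ℝ)) := by
  apply monotoneOn_of_deriv_nonneg (convex_Ici 0)
    (((nstar_continuous (m+1)).sub (nstar_continuous m)).continuousOn)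
  · intro x hx
    exact ((nstar_hasDerivAt (m+1) x).sub (nstar_hasDerivAt m x)).differentiableAt.differentiableWithinAt
  · intro x hx
    rw [interior_Ici] at hx
    rw [((nstar_hasDerivAt (a := a) (m+1) x).sub (nstar_hasDerivAt m x)).deriv]
    have := hD ha1 ha0 hconc m (le_of_lt hx)
    linarith

lemma tele (ha1 : 0 ≤ a 1) (ha0 : a 0 = 0)
    (hconc : ∀ j : ℕ, a (j + 2) - a (j + 1) < a (j + 1) - a j)
    {t1 t2 : ℝ} (ht1 : 0 ≤ t1) (h12 : t1 ≤ t2) :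
    ∀ d p, Nstar a 1 p t2 - Nstar a 1 p t1 ≤ Nstar a 1 (p+d) t2 - Nstar a 1 (p+d) t1 := by
  intro d
  induction d with
  | zero => intro p; exact le_refl _
  | succ d ih =>
    intro p
    have hmm := d_mono ha1 ha0 hconc (p+d) (Set.mem_Ici.mpr ht1)
      (Set.mem_Ici.mpr (le_trans ht1 h12)) h12
    have := ih p
    simp only at hmm
    have e : p + (d+1) = (p+d) + 1 := rfl
    rw [e]
    linarith

end final

lemma nalloc_one (a : ℕ → ℝ) (n j : ℕ) (t : ℝ) :
    Nalloc a 1 n j t = a j + Nstar a 1 (n - j) t := by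
  show a j + (a j * (1 - 1) + 1) * Nstar a 1 (n - j) t = _
  ring


/-- Theorem 4.1 ([A] for the Invincible Fighter): for `u = 1` and every `n ≥ 1`,
`t ↦ K(n,t)` is non-increasing on `[0,∞)`. -/
theorem invincible_A
    (a : ℕ → ℝ) (haI : ∀ j, a j ∈ Set.Icc (0:ℝ) 1) (ha0 : a 0 = 0)
    (hmono : StrictMono a)
    (hconc : ∀ j : ℕ, a (j + 2) - a (j + 1) < a (j + 1) - a j) :
    ∀ n : ℕ, 1 ≤ n → AntitoneOn (fun t => Kopt a 1 n t) (Set.Ici (0:ℝ)) := by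
  intro n hn t1 ht1 t2 ht2 h12
  simp only
  have ha1 : 0 ≤ a 1 := (haI 1).1
  have hne : ∀ t : ℝ, {j : ℕ | 1 ≤ j ∧ j ≤ n ∧ Nalloc a 1 n j t = Nval a 1 n t}.Nonempty := by
    intro t
    obtain ⟨j, hj1, hjn, hje⟩ := nval_exists (a := a) hn t
    exact ⟨j, hj1, hjn, by rw [nalloc_one]; exact hje.symm⟩
  have hk1 : 1 ≤ Kopt a 1 n t1 ∧ Kopt a 1 n t1 ≤ n ∧
      Nalloc a 1 n (Kopt a 1 n t1) t1 = Nval a 1 n t1 := Nat.sInf_mem (hne t1)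
  have hk2 : 1 ≤ Kopt a 1 n t2 ∧ Kopt a 1 n t2 ≤ n ∧
      Nalloc a 1 n (Kopt a 1 n t2) t2 = Nval a 1 n t2 := Nat.sInf_mem (hne t2)
  obtain ⟨h11, h1n, h1e⟩ := hk1
  obtain ⟨h21, h2n, h2e⟩ := hk2
  by_cases hle : Kopt a 1 n t2 ≤ Kopt a 1 n t1
  · exact hle
  · push_neg at hle
    have le1 : Nalloc a 1 n (Kopt a 1 n t1) t2 ≤ Nval a 1 n t2 := by
      rw [nalloc_one]; exact nval_ge h11 h1n t2
    have old : a (Kopt a 1 n t2) + Nstar a 1 (n - Kopt a 1 n t2) t1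
        ≤ a (Kopt a 1 n t1) + Nstar a 1 (n - Kopt a 1 n t1) t1 := by
      have hb := nval_ge (a := a) (n := n) (j := Kopt a 1 n t2) h21 h2n t1
      rw [nalloc_one] at h1e
      rw [h1e]; exact hb
    have tel := tele ha1 ha0 hconc (Set.mem_Ici.mp ht1) h12
      (Kopt a 1 n t2 - Kopt a 1 n t1) (n - Kopt a 1 n t2)
    rw [show n - Kopt a 1 n t2 + (Kopt a 1 n t2 - Kopt a 1 n t1) = n - Kopt a 1 n t1
      by omega] at tel
    have ge1 : Nval a 1 n t2 ≤ Nalloc a 1 n (Kopt a 1 n t1) t2 := by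
      rw [← h2e, nalloc_one, nalloc_one]
      linarith
    exact Nat.sInf_le ⟨h11, h1n, le_antisymm le1 ge1⟩
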